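/- For every natural number d, in ℤ one has 6 * Polynomial.eval 2 (Polynomial.derivative (Polynomial.derivative (Polynomial.dickson 1 1 d))) = (d : ℤ)^4 − (d : ℤ)^2. That is, the second derivative of the monic Chebyshev polynomial T_d evaluated at 2 equals (d^4 − d^2)/6. -/

import Mathlib

open Polynomial

lemma aux18 : ∀ n : ℕ,
    eval 2 (dickson 1 (1:ℤ) n) = 2 ∧
    eval 2 (derivative (dickson 1 (1:ℤ) n)) = (n:ℤ)^2 ∧
    6 * eval 2 (derivative (derivative (dickson 1 (1:ℤ) n))) = (n:ℤ)^4 - (n:ℤ)^2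
  | 0 => by simp [dickson_zero]
  | 1 => by simp [dickson_one]
  | (n+2) => by
    obtain ⟨a0, b0, c0⟩ := aux18 n
    obtain ⟨a1, b1, c1⟩ := aux18 (n+1)
    rw [dickson_add_two]
    simp only [map_one, one_mul, derivative_sub, derivative_mul, derivative_X, derivative_one,
      eval_sub, eval_mul, eval_add, eval_X, eval_one, derivative_add, a0, a1, b0, b1]
    push_cast
    push_cast at c0 c1
    refine ⟨trivial, by ring, by linarith [c0, c1]⟩

theorem stmt_18 (d : ℕ) :
    6 * Polynomial.eval 2
        (Polynomial.derivative (Polynomial.derivative (Polynomial.dickson 1 (1 : ℤ) d))) =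
      (d : ℤ) ^ 4 - (d : ℤ) ^ 2 := by
  exact (aux18 d).2.2
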